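/- For each i ∈ {1,2}, the gradient of the Malthusian parameter is Lipschitz on U_i: there exists a constant C > 0 such that for all x, y ∈ U_i, ‖∇λ(x) − ∇λ(y)‖ ≤ C ‖x − y‖, where for x ∈ U₁, ∇λ(x) = (e^{-λ(x) x_b} / G(x), 0) and for x ∈ U₂, ∇λ(x) = (0, e^{-λ(x) x_d} / G(x)). -/

import Mathlib

open MeasureTheory Set Filter

noncomputable section

/-- The viable set `𝒱 = {(x_b, x_d) : min(x_b, x_d) > 1}`. -/
def viable : Set (ℝ × ℝ) := {x : ℝ × ℝ | 1 < min x.1 x.2}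

/-- `U₁ = {x ∈ 𝒱 : x_b < x_d}`. -/
def U1 : Set (ℝ × ℝ) := {x ∈ viable | x.1 < x.2}

/-- `U₂ = {x ∈ 𝒱 : x_d < x_b}`. -/
def U2 : Set (ℝ × ℝ) := {x ∈ viable | x.2 < x.1}

/-- `lam` is a Malthusian parameter function on `𝒱`. -/
def IsMalthusian (lam : ℝ × ℝ → ℝ) : Prop :=
  ∀ x ∈ viable, 0 < lam x ∧ (∫ a in (0:ℝ)..(min x.1 x.2), Real.exp (-(lam x) * a)) = 1

/-- The mean generation time `G(x) = ∫₀^{min(x_b,x_d)} a e^{-λ(x) a} da`. -/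
def genTime (lam : ℝ × ℝ → ℝ) (x : ℝ × ℝ) : ℝ :=
  ∫ a in (0:ℝ)..(min x.1 x.2), a * Real.exp (-(lam x) * a)


def Dfun (t : ℝ) : ℝ := t + (1 - t) * Real.log (1 - t)
def Hfun (t : ℝ) : ℝ := t ^ 2 * (1 - t) / Dfun t
def Mfun (t : ℝ) : ℝ := -Real.log (1 - t) / t

lemma mg_mono {s : Set ℝ} (hs : Convex ℝ s) {f f' : ℝ → ℝ}
    (hd : ∀ x ∈ s, HasDerivAt f (f' x) x) (h' : ∀ x ∈ s, 0 ≤ f' x) : MonotoneOn f s := by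
  refine monotoneOn_of_deriv_nonneg hs
    (fun x hx => (hd x hx).continuousAt.continuousWithinAt)
    (fun x hx => ((hd x (interior_subset hx)).differentiableAt).differentiableWithinAt)
    (fun x hx => ?_)
  rw [(hd x (interior_subset hx)).deriv]
  exact h' x (interior_subset hx)

lemma mg_hasDeriv_log {t : ℝ} (ht : t < 1) :
    HasDerivAt (fun s : ℝ => Real.log (1 - s)) (-(1 / (1 - t))) t := by
  have h := ((hasDerivAt_id t).const_sub 1).log (by intro h; simp at h; linarith)
  have : -(1:ℝ) / (1 - id t) = -(1 / (1 - t)) := by simp [neg_div]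
  rw [this] at h; exact h

lemma mg_hasDeriv_D {t : ℝ} (ht : t < 1) :
    HasDerivAt Dfun (-Real.log (1 - t)) t := by
  have h1 : HasDerivAt (fun s : ℝ => (1 - s) * Real.log (1 - s))
      ((-1) * Real.log (1 - t) + (1 - t) * (-(1 / (1 - t)))) t :=
    (((hasDerivAt_id t).const_sub 1)).mul (mg_hasDeriv_log ht)
  have h2 := (hasDerivAt_id t).add h1
  have h1t : (1 : ℝ) - t ≠ 0 := by intro h; linarith
  unfold Dfun
  refine h2.congr_deriv ?_
  field_simp
  ring
lemma mg_poly_deriv (x : ℝ) :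
    HasDerivAt (fun s : ℝ => s + s ^ 2 / 2 + s ^ 3 / 3) (1 + x + x ^ 2) x := by
  have h := ((hasDerivAt_id x).add ((hasDerivAt_pow 2 x).div_const 2)).add
    ((hasDerivAt_pow 3 x).div_const 3)
  refine h.congr_deriv ?_
  push_cast; ring

lemma mg_log_lb : ∀ t ∈ Ico (0:ℝ) 1, t + t ^ 2 / 2 + t ^ 3 / 3 ≤ -Real.log (1 - t) := by
  intro t ht
  have key : MonotoneOn (fun s : ℝ => -Real.log (1 - s) - (s + s ^ 2 / 2 + s ^ 3 / 3))
      (Ico (0:ℝ) 1) := by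
    apply mg_mono (convex_Ico 0 1) (f' := fun s => 1 / (1 - s) - (1 + s + s ^ 2))
    · intro x hx
      have h := ((mg_hasDeriv_log hx.2).neg).sub (mg_poly_deriv x)
      refine h.congr_deriv ?_ <;> ring
    · intro x hx
      have h1 : (0:ℝ) < 1 - x := by linarith [hx.2]
      have : (1 + x + x ^ 2) ≤ 1 / (1 - x) := by
        rw [le_div_iff₀ h1]; nlinarith [hx.1, pow_nonneg hx.1 3]
      linarith
  have h0 := key (show (0:ℝ) ∈ Ico (0:ℝ) 1 by constructor <;> norm_num) ht ht.1
  simp at h0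
  linarith

lemma mg_log_ub : ∀ t ∈ Icc (0:ℝ) (1/2),
    -Real.log (1 - t) ≤ t + t ^ 2 / 2 + t ^ 3 / 3 + t ^ 4 / 2 := by
  intro t ht
  have key : MonotoneOn (fun s : ℝ => (s + s ^ 2 / 2 + s ^ 3 / 3 + s ^ 4 / 2) + Real.log (1 - s))
      (Icc (0:ℝ) (1/2)) := by
    apply mg_mono (convex_Icc 0 (1/2)) (f' := fun s => (1 + s + s ^ 2 + 2 * s ^ 3) - 1 / (1 - s))
    · intro x hx
      have hx1 : x < 1 := by linarith [hx.2]
      have hp : HasDerivAt (fun s : ℝ => s + s ^ 2 / 2 + s ^ 3 / 3 + s ^ 4 / 2)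
          (1 + x + x ^ 2 + 2 * x ^ 3) x := by
        have h := (mg_poly_deriv x).add ((hasDerivAt_pow 4 x).div_const 2)
        refine h.congr_deriv ?_ <;> (push_cast; ring)
      have h := hp.add (mg_hasDeriv_log hx1)
      refine h.congr_deriv ?_ <;> ring
    · intro x hx
      have h1 : (0:ℝ) < 1 - x := by linarith [hx.2]
      have : 1 / (1 - x) ≤ 1 + x + x ^ 2 + 2 * x ^ 3 := by
        rw [div_le_iff₀ h1]; nlinarith [hx.1, hx.2, pow_nonneg hx.1 3]
      linarith
  have h0 := key (show (0:ℝ) ∈ Icc (0:ℝ) (1/2) by constructor <;> norm_num) ht ht.1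
  simp at h0
  linarith

lemma mg_log_ub2 : ∀ t ∈ Icc (0:ℝ) (1/2),
    -Real.log (1 - t) ≤ t + t ^ 2 / 2 + 2 * t ^ 3 / 3 := by
  intro t ht
  have key : MonotoneOn (fun s : ℝ => (s + s ^ 2 / 2 + 2 * s ^ 3 / 3) + Real.log (1 - s))
      (Icc (0:ℝ) (1/2)) := by
    apply mg_mono (convex_Icc 0 (1/2)) (f' := fun s => (1 + s + 2 * s ^ 2) - 1 / (1 - s))
    · intro x hx
      have hx1 : x < 1 := by linarith [hx.2]
      have hp : HasDerivAt (fun s : ℝ => s + s ^ 2 / 2 + 2 * s ^ 3 / 3)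
          (1 + x + 2 * x ^ 2) x := by
        have h := ((hasDerivAt_id x).add ((hasDerivAt_pow 2 x).div_const 2)).add
          (((hasDerivAt_pow 3 x).const_mul 2).div_const 3)
        refine h.congr_deriv ?_ <;> (push_cast; ring)
      have h := hp.add (mg_hasDeriv_log hx1)
      refine h.congr_deriv ?_ <;> ring
    · intro x hx
      have h1 : (0:ℝ) < 1 - x := by linarith [hx.2]
      have : 1 / (1 - x) ≤ 1 + x + 2 * x ^ 2 := by
        rw [div_le_iff₀ h1]; nlinarith [hx.1, hx.2]
      linarith
  have h0 := key (show (0:ℝ) ∈ Icc (0:ℝ) (1/2) by constructor <;> norm_num) ht ht.1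
  simp at h0
  linarith

lemma mg_Minc : ∀ t ∈ Ico (0:ℝ) 1, t ^ 2 / 2 ≤ t / (1 - t) + Real.log (1 - t) := by
  intro t ht
  have key : MonotoneOn (fun s : ℝ => s / (1 - s) + Real.log (1 - s) - s ^ 2 / 2)
      (Ico (0:ℝ) 1) := by
    apply mg_mono (convex_Ico 0 1)
      (f' := fun s => 1 / (1 - s) ^ 2 - 1 / (1 - s) - s)
    · intro x hx
      have h1 : (1:ℝ) - x ≠ 0 := by intro h; have := hx.2; linarith
      have hq : HasDerivAt (fun s : ℝ => s / (1 - s))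
          ((1 * (1 - x) - x * (-1)) / (1 - x) ^ 2) x :=
        (hasDerivAt_id x).div ((hasDerivAt_id x).const_sub 1) h1
      have h := (hq.add (mg_hasDeriv_log hx.2)).sub ((hasDerivAt_pow 2 x).div_const 2)
      have hgoal : ((1:ℝ) * (1 - x) - x * (-1)) / (1 - x) ^ 2 + -(1 / (1 - x)) - ((2:ℕ):ℝ) * x ^ (2 - 1 : ℕ) / 2
          = 1 / (1 - x) ^ 2 - 1 / (1 - x) - x := by
        push_cast
        field_simp
        ring
      rw [hgoal] at h
      exact h
    · intro x hx
      have h1 : (0:ℝ) < 1 - x := by linarith [hx.2]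
      have h2 : 1 / (1 - x) ^ 2 - 1 / (1 - x) - x = x * (1 - (1 - x) ^ 2) / (1 - x) ^ 2 := by
        field_simp; ring
      rw [h2]
      apply div_nonneg _ (by positivity)
      have : 0 ≤ 1 - (1 - x) ^ 2 := by nlinarith [hx.1, hx.2]
      exact mul_nonneg hx.1 this
  have h0 := key (show (0:ℝ) ∈ Ico (0:ℝ) 1 by constructor <;> norm_num) ht ht.1
  simp at h0
  linarith
lemma mg_D_lb : ∀ t ∈ Ico (0:ℝ) 1, t ^ 2 / 2 + t ^ 3 / 6 ≤ Dfun t := by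
  intro t ht
  have key : MonotoneOn (fun s : ℝ => Dfun s - (s ^ 2 / 2 + s ^ 3 / 6)) (Ico (0:ℝ) 1) := by
    apply mg_mono (convex_Ico 0 1) (f' := fun s => -Real.log (1 - s) - (s + s ^ 2 / 2))
    · intro x hx
      have h := (mg_hasDeriv_D hx.2).sub
        (((hasDerivAt_pow 2 x).div_const 2).add ((hasDerivAt_pow 3 x).div_const 6))
      refine h.congr_deriv ?_ <;> (push_cast; ring)
    · intro x hx
      have := mg_log_lb x hx
      have h3 : 0 ≤ x ^ 3 / 3 := div_nonneg (pow_nonneg hx.1 3) (by norm_num)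
      linarith
  have h0 := key (show (0:ℝ) ∈ Ico (0:ℝ) 1 by constructor <;> norm_num) ht ht.1
  simp only at h0
  have hd0 : Dfun 0 = 0 := by simp [Dfun]
  rw [hd0] at h0
  linarith
lemma mg_D_ub : ∀ t ∈ Icc (0:ℝ) (1/2), Dfun t ≤ t ^ 2 / 2 + t ^ 3 / 6 + t ^ 4 / 6 := by
  intro t ht
  have key : MonotoneOn (fun s : ℝ => (s ^ 2 / 2 + s ^ 3 / 6 + s ^ 4 / 6) - Dfun s)
      (Icc (0:ℝ) (1/2)) := by
    apply mg_mono (convex_Icc 0 (1/2))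
      (f' := fun s => (s + s ^ 2 / 2 + 2 * s ^ 3 / 3) - (-Real.log (1 - s)))
    · intro x hx
      have hx1 : x < 1 := by linarith [hx.2]
      have h := ((((hasDerivAt_pow 2 x).div_const 2).add ((hasDerivAt_pow 3 x).div_const 6)).add
        ((hasDerivAt_pow 4 x).div_const 6)).sub (mg_hasDeriv_D hx1)
      refine h.congr_deriv ?_ <;> (push_cast; ring)
    · intro x hx
      have := mg_log_ub2 x hx
      linarith
  have h0 := key (show (0:ℝ) ∈ Icc (0:ℝ) (1/2) by constructor <;> norm_num) ht ht.1
  simp only at h0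
  have hd0 : Dfun 0 = 0 := by simp [Dfun]
  rw [hd0] at h0
  linarith
lemma mg_D_pos : ∀ t ∈ Ioo (0:ℝ) 1, 0 < Dfun t := by
  intro t ht
  have := mg_D_lb t ⟨le_of_lt ht.1, ht.2⟩
  nlinarith [ht.1, pow_pos ht.1 2, pow_pos ht.1 3]
lemma mg_D_le : ∀ t ∈ Ico (0:ℝ) 1, Dfun t ≤ t := by
  intro t ht
  have h1 : Real.log (1 - t) ≤ 0 := Real.log_nonpos (by linarith [ht.2]) (by linarith [ht.1])
  have h2 : (0:ℝ) ≤ 1 - t := by linarith [ht.2]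
  unfold Dfun
  nlinarith
lemma mg_uL : ∀ t ∈ Ioo (0:ℝ) 1, (1 - t) * (-Real.log (1 - t)) ≤ 1 := by
  intro t ht
  have h1 : (0:ℝ) < 1 - t := by linarith [ht.2]
  have h2 : Real.log (1 / (1 - t)) ≤ 1 / (1 - t) - 1 := Real.log_le_sub_one_of_pos (by positivity)
  rw [Real.log_div one_ne_zero (ne_of_gt h1), Real.log_one] at h2
  have h3 : -Real.log (1 - t) ≤ t / (1 - t) := by
    have : 1 / (1 - t) - 1 = t / (1 - t) := by field_simp; ring
    linarith [this ▸ h2]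
  calc (1 - t) * (-Real.log (1 - t)) ≤ (1 - t) * (t / (1 - t)) :=
        mul_le_mul_of_nonneg_left h3 (le_of_lt h1)
    _ = t := by field_simp
    _ ≤ 1 := le_of_lt ht.2
lemma mg_N_bound : ∀ t ∈ Ioo (0:ℝ) 1,
    |(2 * t - 3 * t ^ 2) * Dfun t - t ^ 2 * (1 - t) * (-Real.log (1 - t))| ≤ 32 * t ^ 4 := by
  intro t ht
  obtain ⟨ht0, ht1⟩ := ht
  rcases le_or_gt t (1/2) with hc | hc
  · -- small t
    have hD0 := mg_D_lb t ⟨le_of_lt ht0, ht1⟩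
    have hD1 := mg_D_ub t ⟨le_of_lt ht0, hc⟩
    have hL0 := mg_log_lb t ⟨le_of_lt ht0, ht1⟩
    have hL1 := mg_log_ub t ⟨le_of_lt ht0, hc⟩
    have hA : 0 ≤ 2 * t - 3 * t ^ 2 := by nlinarith
    have hB : 0 ≤ t ^ 2 * (1 - t) := by nlinarith
    rw [abs_le]
    constructor
    · nlinarith [mul_le_mul_of_nonneg_left hD0 hA, mul_le_mul_of_nonneg_left hL1 hB,
        pow_pos ht0 4, pow_pos ht0 5]
    · nlinarith [mul_le_mul_of_nonneg_left hD1 hA, mul_le_mul_of_nonneg_left hL0 hB,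
        pow_pos ht0 4]
  · -- large t
    have hD0 : 0 < Dfun t := mg_D_pos t ⟨ht0, ht1⟩
    have hDle : Dfun t ≤ t := mg_D_le t ⟨le_of_lt ht0, ht1⟩
    have hu : (1 - t) * (-Real.log (1 - t)) ≤ 1 := mg_uL t ⟨ht0, ht1⟩
    have hLpos : 0 ≤ -Real.log (1 - t) :=
      neg_nonneg.2 (Real.log_nonpos (by linarith) (by linarith))
    have h1 : |(2 * t - 3 * t ^ 2) * Dfun t| ≤ 1 := by
      rw [abs_mul]
      have ha : |2 * t - 3 * t ^ 2| ≤ 1 := by rw [abs_le]; constructor <;> nlinarith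
      have hb : |Dfun t| ≤ 1 := by rw [abs_of_pos hD0]; linarith
      calc |2 * t - 3 * t ^ 2| * |Dfun t| ≤ 1 * 1 :=
            mul_le_mul ha hb (abs_nonneg _) zero_le_one
        _ = 1 := by norm_num
    have h2 : |t ^ 2 * (1 - t) * (-Real.log (1 - t))| ≤ 1 := by
      have hb : 0 ≤ (1 - t) * (-Real.log (1 - t)) := by
        apply mul_nonneg (by linarith) hLpos
      rw [abs_of_nonneg (by nlinarith : (0:ℝ) ≤ t ^ 2 * (1 - t) * (-Real.log (1 - t)))]
      calc t ^ 2 * (1 - t) * (-Real.log (1 - t)) = t ^ 2 * ((1 - t) * (-Real.log (1 - t))) := by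
            ring
        _ ≤ 1 * 1 := mul_le_mul (by nlinarith) hu hb (by norm_num)
        _ = 1 := by norm_num
    have h16 : (1:ℝ)/16 ≤ t ^ 4 := by
      have := pow_le_pow_left₀ (by norm_num : (0:ℝ) ≤ 1/2) (le_of_lt hc) 4
      norm_num at this ⊢
      linarith
    calc |(2 * t - 3 * t ^ 2) * Dfun t - t ^ 2 * (1 - t) * (-Real.log (1 - t))|
        ≤ |(2 * t - 3 * t ^ 2) * Dfun t| + |t ^ 2 * (1 - t) * (-Real.log (1 - t))| :=
          abs_sub _ _
      _ ≤ 2 := by linarith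
      _ ≤ 32 * t ^ 4 := by linarith
lemma mg_H_deriv {t : ℝ} (ht : t ∈ Ioo (0:ℝ) 1) :
    HasDerivAt Hfun
      (((2 * t - 3 * t ^ 2) * Dfun t - t ^ 2 * (1 - t) * (-Real.log (1 - t))) / (Dfun t) ^ 2) t := by
  have hD := mg_D_pos t ht
  have hP : HasDerivAt (fun s : ℝ => s ^ 2 * (1 - s))
      ((2 * t) * (1 - t) + t ^ 2 * (-1)) t := by
    have h := (hasDerivAt_pow 2 t).mul ((hasDerivAt_id t).const_sub 1)
    simp only [id_eq] at h
    refine h.congr_deriv ?_ <;> (push_cast; ring)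
  have h := hP.div (mg_hasDeriv_D ht.2) (ne_of_gt hD)
  have heq : (((2 * t) * (1 - t) + t ^ 2 * (-1)) * Dfun t - t ^ 2 * (1 - t) * (-Real.log (1 - t)))
        / (Dfun t) ^ 2
      = ((2 * t - 3 * t ^ 2) * Dfun t - t ^ 2 * (1 - t) * (-Real.log (1 - t))) / (Dfun t) ^ 2 := by
    ring_nf
  rw [heq] at h
  exact h

lemma mg_H_lip : ∀ t ∈ Ioo (0:ℝ) 1, ∀ s ∈ Ioo (0:ℝ) 1,
    |Hfun t - Hfun s| ≤ 128 * |t - s| := by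
  intro t ht s hs
  have key := Convex.norm_image_sub_le_of_norm_hasDerivWithin_le
    (f := Hfun)
    (f' := fun u => ((2 * u - 3 * u ^ 2) * Dfun u - u ^ 2 * (1 - u) * (-Real.log (1 - u))) / (Dfun u) ^ 2)
    (s := Ioo (0:ℝ) 1) (C := 128)
    (fun u hu => (mg_H_deriv hu).hasDerivWithinAt)
    (fun u hu => ?_) (convex_Ioo 0 1) hs ht
  · simpa [Real.norm_eq_abs] using key
  · have hD := mg_D_pos u hu
    have hDlb := mg_D_lb u ⟨le_of_lt hu.1, hu.2⟩
    have hN := mg_N_bound u hu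
    have h0 : u ^ 2 / 2 ≤ Dfun u := by
      have := pow_nonneg (le_of_lt hu.1) 3
      linarith
    have hsq : (u ^ 2 / 2) ^ 2 ≤ (Dfun u) ^ 2 := pow_le_pow_left₀ (by positivity) h0 2
    have hD2 : u ^ 4 / 4 ≤ (Dfun u) ^ 2 := by
      have : (u ^ 2 / 2) ^ 2 = u ^ 4 / 4 := by ring
      linarith
    rw [Real.norm_eq_abs, abs_div, abs_of_pos (by positivity : (0:ℝ) < (Dfun u) ^ 2)]
    rw [div_le_iff₀ (by positivity)]
    calc |(2 * u - 3 * u ^ 2) * Dfun u - u ^ 2 * (1 - u) * (-Real.log (1 - u))|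
        ≤ 32 * u ^ 4 := hN
      _ = 128 * (u ^ 4 / 4) := by ring
      _ ≤ 128 * (Dfun u) ^ 2 := by linarith

lemma mg_M_deriv {t : ℝ} (ht : t ∈ Ioo (0:ℝ) 1) :
    HasDerivAt Mfun ((t / (1 - t) + Real.log (1 - t)) / t ^ 2) t := by
  have h := ((mg_hasDeriv_log ht.2).neg).div (hasDerivAt_id t) (ne_of_gt ht.1)
  simp only [id_eq] at h
  have h1 : (1:ℝ) - t ≠ 0 := by intro h; have := ht.2; linarith
  have ht0 : t ≠ 0 := ne_of_gt ht.1
  have heq : (-(-(1 / (1 - t))) * t - -Real.log (1 - t) * 1) / t ^ 2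
      = (t / (1 - t) + Real.log (1 - t)) / t ^ 2 := by
    field_simp
    ring
  unfold Mfun
  exact h.congr_deriv heq

lemma mg_M_lower : ∀ t ∈ Ioo (0:ℝ) 1, ∀ s ∈ Ioo (0:ℝ) 1,
    |t - s| ≤ 2 * |Mfun t - Mfun s| := by
  have key : MonotoneOn (fun u : ℝ => Mfun u - u / 2) (Ioo (0:ℝ) 1) := by
    apply mg_mono (convex_Ioo 0 1)
      (f' := fun u => (u / (1 - u) + Real.log (1 - u)) / u ^ 2 - 1 / 2)
    · intro x hx
      have h := (mg_M_deriv hx).sub ((hasDerivAt_id x).div_const 2)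
      refine h.congr_deriv ?_ <;> norm_num
    · intro x hx
      have h1 := mg_Minc x ⟨le_of_lt hx.1, hx.2⟩
      have hx2 : (0:ℝ) < x ^ 2 := pow_pos hx.1 2
      have h2 : 1 / 2 ≤ (x / (1 - x) + Real.log (1 - x)) / x ^ 2 := by
        rw [le_div_iff₀ hx2]
        linarith
      linarith
  intro t ht s hs
  rcases le_total s t with h | h
  · have hst := key hs ht h
    simp only at hst
    rw [abs_of_nonneg (by linarith : (0:ℝ) ≤ t - s),
      abs_of_nonneg (by linarith : (0:ℝ) ≤ Mfun t - Mfun s)]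
    linarith
  · have hst := key ht hs h
    simp only at hst
    rw [abs_of_nonpos (by linarith : t - s ≤ (0:ℝ)),
      abs_of_nonpos (by linarith : Mfun t - Mfun s ≤ (0:ℝ))]
    linarith
lemma mg_int1 {t m : ℝ} (ht : 0 < t) :
    ∫ a in (0:ℝ)..m, Real.exp (-t * a) = (1 - Real.exp (-t * m)) / t := by
  have hF : ∀ a ∈ uIcc (0:ℝ) m,
      HasDerivAt (fun a : ℝ => -(Real.exp (-t * a) / t)) (Real.exp (-t * a)) a := by
    intro a _
    have h1 : HasDerivAt (fun a : ℝ => -t * a) (-t) a := by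
      simpa using (hasDerivAt_id a).const_mul (-t)
    have h2 := (h1.exp.div_const t).neg
    refine h2.congr_deriv ?_
    field_simp
  have hint : IntervalIntegrable (fun a : ℝ => Real.exp (-t * a)) MeasureTheory.volume 0 m :=
    (Real.continuous_exp.comp (continuous_const.mul continuous_id)).intervalIntegrable 0 m
  rw [intervalIntegral.integral_eq_sub_of_hasDerivAt hF hint]
  rw [mul_zero, Real.exp_zero]
  field_simp
  ring

lemma mg_int2 {t m : ℝ} (ht : 0 < t) :
    ∫ a in (0:ℝ)..m, a * Real.exp (-t * a)
      = (1 - Real.exp (-t * m) - t * m * Real.exp (-t * m)) / t ^ 2 := by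
  have hF : ∀ a ∈ uIcc (0:ℝ) m,
      HasDerivAt (fun a : ℝ => -(a * Real.exp (-t * a) / t) - Real.exp (-t * a) / t ^ 2)
        (a * Real.exp (-t * a)) a := by
    intro a _
    have h1 : HasDerivAt (fun a : ℝ => -t * a) (-t) a := by
      simpa using (hasDerivAt_id a).const_mul (-t)
    have hexp := h1.exp
    have hmul := (hasDerivAt_id a).mul hexp
    have h2 := ((hmul.div_const t).neg).sub (hexp.div_const (t ^ 2))
    simp only [id_eq] at h2
    refine h2.congr_deriv ?_
    have htne : t ≠ 0 := ne_of_gt ht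
    field_simp
    ring
  have hint : IntervalIntegrable (fun a : ℝ => a * Real.exp (-t * a)) MeasureTheory.volume 0 m :=
    (continuous_id.mul (Real.continuous_exp.comp (continuous_const.mul continuous_id))).intervalIntegrable 0 m
  rw [intervalIntegral.integral_eq_sub_of_hasDerivAt hF hint]
  rw [mul_zero, Real.exp_zero]
  have htne : t ≠ 0 := ne_of_gt ht
  field_simp
  ring
lemma mg_key {lam : ℝ × ℝ → ℝ} (hlam : IsMalthusian lam) {x : ℝ × ℝ} (hx : x ∈ viable) :
    lam x ∈ Ioo (0:ℝ) 1 ∧ min x.1 x.2 = Mfun (lam x) ∧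
      Real.exp (-(lam x) * min x.1 x.2) / genTime lam x = Hfun (lam x) := by
  obtain ⟨ht0, hint⟩ := hlam x hx
  have hm1 : (1:ℝ) < min x.1 x.2 := hx
  set t := lam x with htdef
  set m := min x.1 x.2 with hmdef
  have htne : t ≠ 0 := ne_of_gt ht0
  rw [mg_int1 ht0] at hint
  rw [div_eq_one_iff_eq htne] at hint
  have hEpos : (0:ℝ) < Real.exp (-t * m) := Real.exp_pos _
  have hE1 : Real.exp (-t * m) = 1 - t := by linarith
  have ht1 : t < 1 := by linarith
  have hlog : Real.log (1 - t) = -t * m := by rw [← hE1, Real.log_exp]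
  have htm : t * m = -Real.log (1 - t) := by rw [hlog]; ring
  have hMm : m = Mfun t := by
    unfold Mfun
    rw [hlog]
    field_simp
  have hG : genTime lam x = Dfun t / t ^ 2 := by
    unfold genTime
    rw [← hmdef, ← htdef, mg_int2 ht0]
    congr 1
    calc 1 - Real.exp (-t * m) - t * m * Real.exp (-t * m)
        = 1 - (1 - t) - -Real.log (1 - t) * (1 - t) := by rw [hE1, htm]
      _ = Dfun t := by unfold Dfun; ring
  refine ⟨⟨ht0, ht1⟩, hMm, ?_⟩
  rw [hG, hE1]
  unfold Hfun
  have hD := mg_D_pos t ⟨ht0, ht1⟩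
  have hDne : Dfun t ≠ 0 := ne_of_gt hD
  field_simp

/-- On each region `U_i` the gradient of the Malthusian parameter is Lipschitz:
on `U₁` the gradient is `(e^{-λ(x) x_b}/G(x), 0)` and on `U₂` it is
`(0, e^{-λ(x) x_d}/G(x))`. -/
theorem malthus_gradient_lipschitz (lam : ℝ × ℝ → ℝ) (hlam : IsMalthusian lam) :
    (∃ C > (0:ℝ), ∀ x ∈ U1, ∀ y ∈ U1,
      ‖((Real.exp (-(lam x) * x.1) / genTime lam x, (0:ℝ)) : ℝ × ℝ)
        - (Real.exp (-(lam y) * y.1) / genTime lam y, (0:ℝ))‖ ≤ C * ‖x - y‖) ∧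
    (∃ C > (0:ℝ), ∀ x ∈ U2, ∀ y ∈ U2,
      ‖(((0:ℝ), Real.exp (-(lam x) * x.2) / genTime lam x) : ℝ × ℝ)
        - ((0:ℝ), Real.exp (-(lam y) * y.2) / genTime lam y)‖ ≤ C * ‖x - y‖) := by
  constructor
  · refine ⟨256, by norm_num, ?_⟩
    intro x hx y hy
    obtain ⟨htx, hMx, hHx⟩ := mg_key hlam hx.1
    obtain ⟨hty, hMy, hHy⟩ := mg_key hlam hy.1
    have hminx : min x.1 x.2 = x.1 := min_eq_left (le_of_lt hx.2)
    have hminy : min y.1 y.2 = y.1 := min_eq_left (le_of_lt hy.2)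
    rw [hminx] at hMx hHx
    rw [hminy] at hMy hHy
    have hnorm : ‖((Real.exp (-(lam x) * x.1) / genTime lam x, (0:ℝ)) : ℝ × ℝ)
        - (Real.exp (-(lam y) * y.1) / genTime lam y, (0:ℝ))‖
        = |Real.exp (-(lam x) * x.1) / genTime lam x
            - Real.exp (-(lam y) * y.1) / genTime lam y| := by
      rw [show ((Real.exp (-(lam x) * x.1) / genTime lam x, (0:ℝ)) : ℝ × ℝ)
          - (Real.exp (-(lam y) * y.1) / genTime lam y, (0:ℝ))
          = (Real.exp (-(lam x) * x.1) / genTime lam x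
              - Real.exp (-(lam y) * y.1) / genTime lam y, (0:ℝ)) from by
        simp [Prod.ext_iff]]
      rw [Prod.norm_def, norm_zero, Real.norm_eq_abs]
      exact max_eq_left (abs_nonneg _)
    rw [hnorm, hHx, hHy]
    have h1 := mg_H_lip _ htx _ hty
    have h2 := mg_M_lower _ htx _ hty
    rw [← hMx, ← hMy] at h2
    have h3 : |x.1 - y.1| ≤ ‖x - y‖ := by
      have := norm_fst_le (x - y)
      simpa [Real.norm_eq_abs] using this
    calc |Hfun (lam x) - Hfun (lam y)| ≤ 128 * |lam x - lam y| := h1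
      _ ≤ 128 * (2 * |x.1 - y.1|) := by linarith
      _ = 256 * |x.1 - y.1| := by ring
      _ ≤ 256 * ‖x - y‖ := by linarith
  · refine ⟨256, by norm_num, ?_⟩
    intro x hx y hy
    obtain ⟨htx, hMx, hHx⟩ := mg_key hlam hx.1
    obtain ⟨hty, hMy, hHy⟩ := mg_key hlam hy.1
    have hminx : min x.1 x.2 = x.2 := min_eq_right (le_of_lt hx.2)
    have hminy : min y.1 y.2 = y.2 := min_eq_right (le_of_lt hy.2)
    rw [hminx] at hMx hHx
    rw [hminy] at hMy hHy
    have hnorm : ‖(((0:ℝ), Real.exp (-(lam x) * x.2) / genTime lam x) : ℝ × ℝ)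
        - ((0:ℝ), Real.exp (-(lam y) * y.2) / genTime lam y)‖
        = |Real.exp (-(lam x) * x.2) / genTime lam x
            - Real.exp (-(lam y) * y.2) / genTime lam y| := by
      rw [show (((0:ℝ), Real.exp (-(lam x) * x.2) / genTime lam x) : ℝ × ℝ)
          - ((0:ℝ), Real.exp (-(lam y) * y.2) / genTime lam y)
          = ((0:ℝ), Real.exp (-(lam x) * x.2) / genTime lam x
              - Real.exp (-(lam y) * y.2) / genTime lam y) from by
        simp [Prod.ext_iff]]
      rw [Prod.norm_def, norm_zero, Real.norm_eq_abs]
      exact max_eq_right (abs_nonneg _)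
    rw [hnorm, hHx, hHy]
    have h1 := mg_H_lip _ htx _ hty
    have h2 := mg_M_lower _ htx _ hty
    rw [← hMx, ← hMy] at h2
    have h3 : |x.2 - y.2| ≤ ‖x - y‖ := by
      have := norm_snd_le (x - y)
      simpa [Real.norm_eq_abs] using this
    calc |Hfun (lam x) - Hfun (lam y)| ≤ 128 * |lam x - lam y| := h1
      _ ≤ 128 * (2 * |x.2 - y.2|) := by linarith
      _ = 256 * |x.2 - y.2| := by ring
      _ ≤ 256 * ‖x - y‖ := by linarith
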